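/- arXiv:1907.00961 — 2 statements merged into one kernel-verified Lean document; each statement's English description precedes it below -/
import Mathlib

section
/- If y : ℝ → ℝ is twice differentiable on t > 0 and satisfies t^2 y'' + 4t y' + 2y = (2ty + t^2 y')^{1/2} with 2ty + t^2 y' ≥ 0, then for a b : ℝ with e^a t + b > 0 on the relevant domain, the function ŷ defined by ŷ(t̂) = e^{3a} t^2 y(t) / (e^a t + b)^2 where t̂ = e^a t + b satisfies t̂^2 ŷ'' + 4 t̂ ŷ' + 2 ŷ = (2 t̂ ŷ + t̂^2 ŷ')^{1/2}. -/
private lemma hg' (b c' : ℝ) (s : ℝ) :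
    HasDerivAt (fun s : ℝ => (s - b) * c') c' s := by
  simpa using ((hasDerivAt_id s).sub_const b).mul_const c'

private lemma hasDerivAt_N (y : ℝ → ℝ) (b c' s : ℝ)
    (hy : DifferentiableAt ℝ y ((s - b) * c')) :
    HasDerivAt (fun s : ℝ => ((s - b) * c') ^ 2 * y ((s - b) * c'))
      (c' * (2 * ((s - b) * c') * y ((s - b) * c') +
        ((s - b) * c') ^ 2 * deriv y ((s - b) * c'))) s := by
  have hg := hg' b c' s
  have hyc : HasDerivAt (fun s : ℝ => y ((s - b) * c'))
      (deriv y ((s - b) * c') * c') s := (hy.hasDerivAt).comp s hg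
  have hsq : HasDerivAt (fun s : ℝ => ((s - b) * c') ^ 2)
      (2 * ((s - b) * c') * c') s := by
    simpa [pow_one] using hg.fun_pow 2
  refine (hsq.fun_mul hyc).congr_deriv ?_
  ring

private lemma hasDerivAt_P (y : ℝ → ℝ) (b c' s : ℝ)
    (hy : DifferentiableAt ℝ y ((s - b) * c'))
    (hy' : DifferentiableAt ℝ (deriv y) ((s - b) * c')) :
    HasDerivAt (fun s : ℝ => c' * (2 * ((s - b) * c') * y ((s - b) * c') +
        ((s - b) * c') ^ 2 * deriv y ((s - b) * c')))
      (c' ^ 2 * (2 * y ((s - b) * c') + 4 * ((s - b) * c') * deriv y ((s - b) * c') +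
        ((s - b) * c') ^ 2 * deriv (deriv y) ((s - b) * c'))) s := by
  have hg := hg' b c' s
  have hyc : HasDerivAt (fun s : ℝ => y ((s - b) * c'))
      (deriv y ((s - b) * c') * c') s := (hy.hasDerivAt).comp s hg
  have hy'c : HasDerivAt (fun s : ℝ => deriv y ((s - b) * c'))
      (deriv (deriv y) ((s - b) * c') * c') s := by
    have := (hy'.hasDerivAt).comp s hg; exact this
  have hsq : HasDerivAt (fun s : ℝ => ((s - b) * c') ^ 2)
      (2 * ((s - b) * c') * c') s := by
    simpa [pow_one] using hg.fun_pow 2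
  have h1 := (hg.const_mul 2).fun_mul hyc
  have h2 := hsq.fun_mul hy'c
  refine ((h1.fun_add h2).const_mul c').congr_deriv ?_
  ring

theorem stmt_8 (y : ℝ → ℝ)
    (hy1 : ∀ t > (0:ℝ), DifferentiableAt ℝ y t)
    (hy2 : ∀ t > (0:ℝ), DifferentiableAt ℝ (deriv y) t)
    (hode : ∀ t > (0:ℝ), t ^ 2 * deriv (deriv y) t + 4 * t * deriv y t + 2 * y t =
        Real.sqrt (2 * t * y t + t ^ 2 * deriv y t))
    (hnn : ∀ t > (0:ℝ), 0 ≤ 2 * t * y t + t ^ 2 * deriv y t)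
    (a b : ℝ)
    (hdom : ∀ t > (0:ℝ), 0 < Real.exp a * t + b) :
    ∀ t > (0:ℝ),
      let Yhat : ℝ → ℝ := fun s =>
        Real.exp (3 * a) * ((s - b) * Real.exp (-a)) ^ 2 *
          y ((s - b) * Real.exp (-a)) / s ^ 2
      let s := Real.exp a * t + b
      s ^ 2 * deriv (deriv Yhat) s + 4 * s * deriv Yhat s + 2 * Yhat s =
        Real.sqrt (2 * s * Yhat s + s ^ 2 * deriv Yhat s) := by
  intro t ht Yhat s
  have hb : 0 ≤ b := by
    by_contra h
    push_neg at h
    have ht' : (0:ℝ) < -b / (2 * Real.exp a) := by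
      apply div_pos (by linarith) (by positivity)
    have h2 := hdom _ ht'
    have h3 : Real.exp a * (-b / (2 * Real.exp a)) + b = b / 2 := by
      field_simp
      ring
    rw [h3] at h2
    linarith
  have hs : s = Real.exp a * t + b := rfl
  have hspos : 0 < s := hdom t ht
  have hsb : s ∈ Set.Ioi b := by
    simp only [Set.mem_Ioi, hs]
    nlinarith [Real.exp_pos a]
  have hgt : (s - b) * Real.exp (-a) = t := by
    rw [hs]
    rw [show Real.exp a * t + b - b = Real.exp a * t by ring]
    rw [mul_comm (Real.exp a) t, mul_assoc, ← Real.exp_add]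
    simp
  set c' := Real.exp (-a) with hc'
  set E := Real.exp (3 * a) with hE
  set N : ℝ → ℝ := fun x => ((x - b) * c') ^ 2 * y ((x - b) * c') with hN
  set P : ℝ → ℝ := fun x => c' * (2 * ((x - b) * c') * y ((x - b) * c') +
      ((x - b) * c') ^ 2 * deriv y ((x - b) * c')) with hP
  have hYeq : Yhat = fun x => E * N x / x ^ 2 := by
    funext x
    simp only [Yhat, hN]
    ring
  have hden : ∀ x : ℝ, HasDerivAt (fun x : ℝ => x ^ 2) (2 * x) x := by
    intro x
    simpa using hasDerivAt_pow 2 x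
  have hYd : ∀ x ∈ Set.Ioi b, HasDerivAt Yhat
      (E * (P x * x ^ 2 - N x * (2 * x)) / (x ^ 2) ^ 2) x := by
    intro x hx
    have hx0 : 0 < x := lt_of_le_of_lt hb hx
    have hgx : 0 < (x - b) * c' := by
      apply mul_pos (by simpa using hx) (Real.exp_pos _)
    have hNd := hasDerivAt_N y b c' x (hy1 _ hgx)
    have num : HasDerivAt (fun x => E * N x) (E * P x) x := hNd.const_mul E
    have := num.fun_div (hden x) (by positivity)
    rw [hYeq]
    refine this.congr_deriv ?_
    ring
  have hd1 : deriv Yhat s = E * (P s * s ^ 2 - N s * (2 * s)) / (s ^ 2) ^ 2 :=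
    (hYd s hsb).deriv
  set Q : ℝ → ℝ := fun x => c' ^ 2 * (2 * y ((x - b) * c') +
      4 * ((x - b) * c') * deriv y ((x - b) * c') +
      ((x - b) * c') ^ 2 * deriv (deriv y) ((x - b) * c')) with hQ
  set D : ℝ → ℝ := fun x => E * (P x * x ^ 2 - N x * (2 * x)) / (x ^ 2) ^ 2 with hD
  have hd1' : deriv (deriv Yhat) s = deriv D s := by
    apply Filter.EventuallyEq.deriv_eq
    apply Filter.eventuallyEq_of_mem (isOpen_Ioi.mem_nhds hsb)
    intro x hx
    exact (hYd x hx).deriv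
  have hgs0 : 0 < (s - b) * c' := by rw [hgt]; exact ht
  have hNs := hasDerivAt_N y b c' s (hy1 _ hgs0)
  have hPs := hasDerivAt_P y b c' s (hy1 _ hgs0) (hy2 _ hgs0)
  have num1 : HasDerivAt (fun x => P x * x ^ 2) (Q s * s ^ 2 + P s * (2 * s)) s :=
    hPs.mul (hden s)
  have num2 : HasDerivAt (fun x => N x * (2 * x)) (P s * (2 * s) + N s * 2) s := by
    have h2x : HasDerivAt (fun x : ℝ => 2 * x) 2 s := by
      simpa using (hasDerivAt_id s).const_mul (2:ℝ)
    simpa using hNs.fun_mul h2x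
  have num : HasDerivAt (fun x => E * (P x * x ^ 2 - N x * (2 * x)))
      (E * (Q s * s ^ 2 + P s * (2 * s) - (P s * (2 * s) + N s * 2))) s :=
    (num1.sub num2).const_mul E
  have den4 : HasDerivAt (fun x : ℝ => (x ^ 2) ^ 2) (2 * s ^ 2 * (2 * s)) s := by
    simpa [pow_one] using (hden s).fun_pow 2
  have hDd : HasDerivAt D
      ((E * (Q s * s ^ 2 + P s * (2 * s) - (P s * (2 * s) + N s * 2)) * (s ^ 2) ^ 2 -
        E * (P s * s ^ 2 - N s * (2 * s)) * (2 * s ^ 2 * (2 * s))) / ((s ^ 2) ^ 2) ^ 2) s := by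
    exact num.div den4 (by positivity)
  rw [hd1', hDd.deriv, hd1, hYeq]
  simp only []
  have hs0 : (s:ℝ) ≠ 0 := ne_of_gt hspos
  have e1 : 2 * s * (E * N s / s ^ 2) +
      s ^ 2 * (E * (P s * s ^ 2 - N s * (2 * s)) / (s ^ 2) ^ 2) = E * P s := by
    field_simp
    ring
  have e2 : s ^ 2 * ((E * (Q s * s ^ 2 + P s * (2 * s) - (P s * (2 * s) + N s * 2)) * (s ^ 2) ^ 2 -
        E * (P s * s ^ 2 - N s * (2 * s)) * (2 * s ^ 2 * (2 * s))) / ((s ^ 2) ^ 2) ^ 2) +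
      4 * s * (E * (P s * s ^ 2 - N s * (2 * s)) / (s ^ 2) ^ 2) +
      2 * (E * N s / s ^ 2) = E * Q s := by
    field_simp
    ring
  rw [e1, e2]
  have hkey : Real.exp (3 * a) * Real.exp (-a) ^ 2 = Real.exp a := by
    rw [sq, ← Real.exp_add, ← Real.exp_add]
    congr 1
    ring
  have hkey2 : Real.exp (3 * a) * Real.exp (-a) = Real.exp a ^ 2 := by
    rw [← Real.exp_add, sq, ← Real.exp_add]
    congr 1
    ring
  have hEQ : E * Q s = Real.exp a * (t ^ 2 * deriv (deriv y) t + 4 * t * deriv y t + 2 * y t) := by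
    simp only [hQ, hgt]
    simp only [hE, hc']
    linear_combination (2 * y t + 4 * t * deriv y t + t ^ 2 * deriv (deriv y) t) * hkey
  have hEP : E * P s = Real.exp a ^ 2 * (2 * t * y t + t ^ 2 * deriv y t) := by
    simp only [hP, hgt]
    simp only [hE, hc']
    linear_combination (2 * t * y t + t ^ 2 * deriv y t) * hkey2
  rw [hEQ, hEP, hode t ht]
  rw [Real.sqrt_mul (sq_nonneg _), Real.sqrt_sq (Real.exp_pos a).le]
end

section
/- Let u, v : ℝ → ℝ be differentiable with u nonvanishing, satisfying v' = u^{-3} and u' = v. For α, β, γ, δ with αδ - βγ = 1 and γt + δ > 0 on the domain, define t̂ = (αt+β)/(γt+δ), û(t̂) = u(t)/(γt+δ), v̂(t̂) = (γt+δ)v(t) - γu(t). Then dv̂/dt̂ = û^{-3} and dû/dt̂ = v̂. -/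
theorem stmt_15 (u v : ℝ → ℝ)
    (hdu : Differentiable ℝ u) (hdv : Differentiable ℝ v)
    (hu : ∀ t, u t ≠ 0)
    (hv' : ∀ t, deriv v t = (u t ^ 3)⁻¹)
    (hu' : ∀ t, deriv u t = v t)
    (α β γ δ : ℝ) (hdet : α * δ - β * γ = 1) :
    let ψ : ℝ → ℝ := fun s => (δ * s - β) / (α - γ * s)
    let Uhat : ℝ → ℝ := fun s => u (ψ s) / (γ * ψ s + δ)
    let Vhat : ℝ → ℝ := fun s => (γ * ψ s + δ) * v (ψ s) - γ * u (ψ s)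
    ∀ t, 0 < γ * t + δ →
      deriv Vhat ((α * t + β) / (γ * t + δ)) =
        (Uhat ((α * t + β) / (γ * t + δ)) ^ 3)⁻¹ ∧
      deriv Uhat ((α * t + β) / (γ * t + δ)) =
        Vhat ((α * t + β) / (γ * t + δ)) := by
  intro ψ Uhat Vhat t hc
  have hc0 : γ * t + δ ≠ 0 := ne_of_gt hc
  set c : ℝ := γ * t + δ with hcdef
  set s₀ : ℝ := (α * t + β) / c with hs0
  have hden : α - γ * s₀ = 1 / c := by
    rw [hs0]
    field_simp
    linear_combination hdet
  have hden0 : α - γ * s₀ ≠ 0 := by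
    rw [hden]; exact one_div_ne_zero hc0
  have hψt : ψ s₀ = t := by
    show (δ * s₀ - β) / (α - γ * s₀) = t
    rw [hden, hs0]
    field_simp
    linear_combination t * hdet
  -- derivative of ψ at s₀
  have hψd : HasDerivAt ψ (c ^ 2) s₀ := by
    have hnum : HasDerivAt (fun s : ℝ => δ * s - β) δ s₀ := by
      simpa using ((hasDerivAt_id s₀).const_mul δ).sub_const β
    have hd : HasDerivAt (fun s : ℝ => α - γ * s) (-γ) s₀ := by
      simpa using (((hasDerivAt_id s₀).const_mul γ).const_sub α)
    have hnumval : δ * (α - γ * s₀) - (δ * s₀ - β) * -γ = 1 := by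
      linear_combination hdet
    have := hnum.div hd hden0
    rw [hnumval, hden] at this
    refine this.congr_deriv ?_
    field_simp
  have huu : ∀ x, HasDerivAt u (v x) x := fun x => hu' x ▸ (hdu x).hasDerivAt
  have hvv : ∀ x, HasDerivAt v ((u x ^ 3)⁻¹) x := fun x => hv' x ▸ (hdv x).hasDerivAt
  have huc : HasDerivAt (fun s => u (ψ s)) (v t * c ^ 2) s₀ := by
    have := (huu (ψ s₀)).comp s₀ hψd
    rw [hψt] at this
    exact this
  have hvc : HasDerivAt (fun s => v (ψ s)) ((u t ^ 3)⁻¹ * c ^ 2) s₀ := by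
    have := (hvv (ψ s₀)).comp s₀ hψd
    rw [hψt] at this
    exact this
  have hdenψ : HasDerivAt (fun s => γ * ψ s + δ) (γ * c ^ 2) s₀ :=
    (hψd.const_mul γ).add_const δ
  have hdenψ0 : γ * ψ s₀ + δ ≠ 0 := by rw [hψt]; exact hc0
  have hval : γ * ψ s₀ + δ = c := by rw [hψt]
  have hUd : HasDerivAt Uhat (c * v t - γ * u t) s₀ := by
    have := huc.div hdenψ hdenψ0
    refine this.congr_deriv ?_
    rw [hval, hψt]
    field_simp
  have hVd : HasDerivAt Vhat (c ^ 3 * (u t ^ 3)⁻¹) s₀ := by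
    have h1 := hdenψ.mul hvc
    have h2 := huc.const_mul γ
    have := h1.sub h2
    refine this.congr_deriv ?_
    rw [hval, hψt]
    ring
  have hUval : Uhat s₀ = u t / c := by
    show u (ψ s₀) / (γ * ψ s₀ + δ) = u t / c
    rw [hψt]
  have hVval : Vhat s₀ = c * v t - γ * u t := by
    show (γ * ψ s₀ + δ) * v (ψ s₀) - γ * u (ψ s₀) = _
    rw [hψt]
  constructor
  · rw [hVd.deriv, hUval]
    rw [div_pow, inv_div]
    rw [div_eq_mul_inv]
  · rw [hUd.deriv, hVval]
end
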